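/- For x, y in the open unit ball of a complex Hilbert space, the pseudo-hyperbolic distance satisfies ρ_E(x,y) ≤ ‖x − y‖ / |1 − ⟨x, y⟩|. -/

import Mathlib

open scoped ComplexInnerProductSpace

/-- The pseudo-hyperbolic metric on the unit ball of a complex Hilbert space, via
`ρ_E(x,y)² = 1 - (1-‖x‖²)(1-‖y‖²)/|1-⟨x,y⟩|²`.  (The paper's inner product `⟨x,y⟩`
is linear in the first variable, i.e. it is Mathlib's `⟪y, x⟫`.) -/
noncomputable def rhoE {E : Type*} [NormedAddCommGroup E] [InnerProductSpace ℂ E]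
    (x y : E) : ℝ :=
  Real.sqrt (1 - (1 - ‖x‖ ^ 2) * (1 - ‖y‖ ^ 2) / ‖(1 - ⟪y, x⟫ : ℂ)‖ ^ 2)

/-- `ρ_E(x,y) ≤ ‖x - y‖ / |1 - ⟨x,y⟩|` for `x, y` in the open unit ball. -/
theorem rhoE_le {E : Type*} [NormedAddCommGroup E] [InnerProductSpace ℂ E]
    (x y : E) (hx : ‖x‖ < 1) (hy : ‖y‖ < 1) :
    rhoE x y ≤ ‖x - y‖ / ‖(1 - ⟪y, x⟫ : ℂ)‖ := by
  set a : ℂ := ⟪y, x⟫ with ha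
  have habs : ‖a‖ ≤ ‖y‖ * ‖x‖ := by
    simpa using norm_inner_le_norm (𝕜 := ℂ) y x
  have habs1 : ‖a‖ < 1 := by
    have h1 : ‖y‖ * ‖x‖ < 1 := by nlinarith [norm_nonneg x, norm_nonneg y]
    linarith
  have hD : 0 < ‖1 - a‖ := by
    have h1 : (1 : ℝ) ≤ ‖1 - a‖ + ‖a‖ := by
      have := norm_add_le (1 - a) a
      simpa using this
    linarith
  set D : ℝ := ‖1 - a‖ with hDdef
  -- key inequality : D^2 ≤ ‖x-y‖^2 + (1-‖x‖^2)(1-‖y‖^2)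
  have hre : ‖x - y‖ ^ 2 = ‖x‖ ^ 2 - 2 * a.re + ‖y‖ ^ 2 := by
    have h := @norm_sub_sq ℂ E _ _ _ x y
    have hswap : (⟪x, y⟫ : ℂ).re = a.re := by
      rw [ha, ← inner_conj_symm x y, Complex.conj_re]
    simpa [hswap] using h
  have hDsq : D ^ 2 = 1 - 2 * a.re + ‖a‖ ^ 2 := by
    rw [hDdef, Complex.sq_norm, Complex.sq_norm, Complex.normSq_sub]
    simp [Complex.normSq_apply, Complex.mul_re]
    ring
  have hCS : ‖a‖ ^ 2 ≤ ‖x‖ ^ 2 * ‖y‖ ^ 2 := by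
    nlinarith [norm_nonneg a, norm_nonneg x, norm_nonneg y]
  have hkey : D ^ 2 ≤ ‖x - y‖ ^ 2 + (1 - ‖x‖ ^ 2) * (1 - ‖y‖ ^ 2) := by
    rw [hDsq, hre]; nlinarith
  rw [rhoE]
  have hdiv : 1 - (1 - ‖x‖ ^ 2) * (1 - ‖y‖ ^ 2) / D ^ 2 ≤ ‖x - y‖ ^ 2 / D ^ 2 := by
    have h1 : 1 - (1 - ‖x‖ ^ 2) * (1 - ‖y‖ ^ 2) / D ^ 2
        = (D ^ 2 - (1 - ‖x‖ ^ 2) * (1 - ‖y‖ ^ 2)) / D ^ 2 := by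
      field_simp
    rw [h1]
    gcongr
    linarith
  calc Real.sqrt (1 - (1 - ‖x‖ ^ 2) * (1 - ‖y‖ ^ 2) / D ^ 2)
      ≤ Real.sqrt (‖x - y‖ ^ 2 / D ^ 2) := Real.sqrt_le_sqrt hdiv
    _ = ‖x - y‖ / D := by
        rw [Real.sqrt_div (sq_nonneg _), Real.sqrt_sq (norm_nonneg _), Real.sqrt_sq hD.le]
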